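/- Let E and F be completely regular topological spaces and ψ : E → F continuous. Then composition x ↦ ψ ∘ x maps càdlàg functions [0,1] → E to càdlàg functions [0,1] → F, and the induced map Ψ : D([0,1],E) → D([0,1],F) is continuous for the Skorohod topologies. -/

import Mathlib

open Set Filter Topology

/-- A pseudometric on a set `E`: vanishes on the diagonal, symmetric, triangle
inequality (nonnegativity follows). -/
def IsPseudometric {E : Type*} (d : E → E → ℝ) : Prop :=
  (∀ a, d a a = 0) ∧ (∀ a b, d a b = d b a) ∧ (∀ a b c, d a c ≤ d a b + d b c)

/-- The topology on `E` generated by a family of pseudometrics: the coarsest topology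
making every map `x ↦ d i a x` continuous. -/
def pseudoTop {E : Type*} {ι : Sort*} (d : ι → E → E → ℝ) : TopologicalSpace E :=
  ⨅ (i : ι) (a : E), TopologicalSpace.induced (fun x => d i a x) inferInstance

/-- A function `f : ℝ → E` is càdlàg on `[0,1]`: right-continuous at every `t ∈ [0,1)`
and with left limits at every `t ∈ (0,1]`. -/
def Cadlag {E : Type*} [TopologicalSpace E] (f : ℝ → E) : Prop :=
  (∀ t ∈ Set.Ico (0:ℝ) 1, Filter.Tendsto f (𝓝[>] t) (𝓝 (f t))) ∧
  (∀ t ∈ Set.Ioc (0:ℝ) 1, ∃ L, Filter.Tendsto f (𝓝[<] t) (𝓝 L))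

/-- The set Λ of strictly increasing continuous maps of `[0,1]` onto itself. -/
def SkLambda : Set (ℝ → ℝ) :=
  {l | ContinuousOn l (Set.Icc 0 1) ∧ StrictMonoOn l (Set.Icc 0 1) ∧
    l '' Set.Icc 0 1 = Set.Icc 0 1}

/-- The Skorohod pseudometric associated to a pseudometric `d` on `E`:
`d̃(x,y) = inf_{λ∈Λ} max( sup_t |λ t − t|, sup_t d (x (λ t)) (y t) )`. -/
noncomputable def skDist {E : Type*} (d : E → E → ℝ) (x y : ℝ → E) : ℝ :=
  sInf {r | ∃ l ∈ SkLambda,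
    r = max (⨆ t : Set.Icc (0:ℝ) 1, |l t - (t : ℝ)|)
            (⨆ t : Set.Icc (0:ℝ) 1, d (x (l t)) (y t))}

/-- The Skorohod topology on a set `D` of functions `[0,1] → E` generated by the Skorohod
pseudometrics associated to a family of pseudometrics on `E`. -/
noncomputable def skTop {E : Type*} {κ : Type*} (D : Set (ℝ → E)) (fam : κ → E → E → ℝ) :
    TopologicalSpace D :=
  ⨅ (k : κ) (x : D), TopologicalSpace.induced
    (fun y : D => skDist (fam k) (x : ℝ → E) (y : ℝ → E)) inferInstance

lemma psd_refl {E} {d : E → E → ℝ} (h : IsPseudometric d) (a : E) : d a a = 0 := h.1 a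
lemma psd_symm {E} {d : E → E → ℝ} (h : IsPseudometric d) (a b : E) : d a b = d b a := h.2.1 a b
lemma psd_tri {E} {d : E → E → ℝ} (h : IsPseudometric d) (a b c : E) : d a c ≤ d a b + d b c := h.2.2 a b c

lemma psd_nonneg {E} {d : E → E → ℝ} (h : IsPseudometric d) (a b : E) : 0 ≤ d a b := by
  have h1 := h.1 a
  have h2 := h.2.1 b a
  have h3 := h.2.2 a b a
  rw [h1, h2] at h3; linarith

lemma skLambda_id : (id : ℝ → ℝ) ∈ SkLambda :=
  ⟨continuousOn_id, fun a _ b _ h => h, Set.image_id _⟩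

lemma skLambda_maps {l : ℝ → ℝ} (hl : l ∈ SkLambda) {t : ℝ} (ht : t ∈ Set.Icc (0:ℝ) 1) :
    l t ∈ Set.Icc (0:ℝ) 1 := hl.2.2 ▸ Set.mem_image_of_mem l ht

lemma skLambda_comp {l₁ l₂ : ℝ → ℝ} (h1 : l₁ ∈ SkLambda) (h2 : l₂ ∈ SkLambda) :
    (l₁ ∘ l₂) ∈ SkLambda := by
  refine ⟨h1.1.comp h2.1 fun t ht => skLambda_maps h2 ht, ?_, ?_⟩
  · intro a ha b hb hab
    exact h1.2.1 (skLambda_maps h2 ha) (skLambda_maps h2 hb) (h2.2.1 ha hb hab)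
  · rw [Set.image_comp, h2.2.2, h1.2.2]

lemma skLambda_inv {l : ℝ → ℝ} (hl : l ∈ SkLambda) :
    ∃ m ∈ SkLambda, ∀ t ∈ Set.Icc (0:ℝ) 1, m t ∈ Set.Icc (0:ℝ) 1 ∧ l (m t) = t := by
  classical
  set K := Set.Icc (0:ℝ) 1 with hK
  have hLmem : ∀ t : K, l t ∈ K := fun t => skLambda_maps hl t.2
  let L : K → K := fun t => ⟨l t, hLmem t⟩
  have hLc : Continuous L := by
    refine Continuous.subtype_mk ?_ _
    exact hl.1.restrict
  have hLinj : Function.Injective L := by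
    intro a b hab
    have := congrArg Subtype.val hab
    exact Subtype.ext (hl.2.1.injOn a.2 b.2 this)
  have hLsurj : Function.Surjective L := by
    rintro ⟨t, ht⟩
    have : t ∈ l '' K := hl.2.2 ▸ ht
    obtain ⟨s, hs, hst⟩ := this
    exact ⟨⟨s, hs⟩, Subtype.ext hst⟩
  let eqv : K ≃ K := Equiv.ofBijective L ⟨hLinj, hLsurj⟩
  have heqv : Continuous eqv := hLc
  let homeo := heqv.homeoOfEquivCompactToT2
  let m : ℝ → ℝ := fun t => if ht : t ∈ K then (homeo.symm ⟨t, ht⟩ : ℝ) else t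
  have hm_mem : ∀ t (ht : t ∈ K), m t ∈ K := by
    intro t ht; simp only [m, dif_pos ht]; exact (homeo.symm ⟨t, ht⟩).2
  have hml : ∀ t (ht : t ∈ K), l (m t) = t := by
    intro t ht
    simp only [m, dif_pos ht]
    have : L (homeo.symm ⟨t, ht⟩) = ⟨t, ht⟩ := homeo.apply_symm_apply ⟨t, ht⟩
    exact congrArg Subtype.val this
  have hlm : ∀ t (ht : t ∈ K), m (l t) = t := by
    intro t ht
    have h1 : l t ∈ K := skLambda_maps hl ht
    simp only [m, dif_pos h1]
    have : homeo.symm ⟨l t, h1⟩ = ⟨t, ht⟩ := by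
      apply homeo.injective
      rw [homeo.apply_symm_apply]
      rfl
    exact congrArg Subtype.val this
  have hmono : StrictMonoOn m K := by
    intro a ha b hb hab
    by_contra h
    push_neg at h
    have := hl.2.1.monotoneOn (hm_mem b hb) (hm_mem a ha) h
    rw [hml a ha, hml b hb] at this
    exact absurd this (not_le.2 hab)
  refine ⟨m, ⟨?_, hmono, ?_⟩, fun t ht => ⟨hm_mem t ht, hml t ht⟩⟩
  · rw [continuousOn_iff_continuous_restrict]
    have : (Set.Icc (0:ℝ) 1).domRestrict m = fun p : K => (homeo.symm p : ℝ) := by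
      funext p
      simp only [Set.domRestrict_apply, m, dif_pos p.2]
      exact dif_pos p.2
    rw [this]
    exact continuous_subtype_val.comp homeo.symm.continuous
  · apply Set.eq_of_subset_of_subset
    · rintro t ⟨s, hs, rfl⟩; exact hm_mem s hs
    · intro t ht
      have h1 : l t ∈ K := skLambda_maps hl ht
      exact ⟨l t, h1, hlm t ht⟩

def skSet {E : Type*} (d : E → E → ℝ) (x y : ℝ → E) : Set ℝ :=
  {r | ∃ l ∈ SkLambda,
    r = max (⨆ t : Set.Icc (0:ℝ) 1, |l t - (t : ℝ)|)
            (⨆ t : Set.Icc (0:ℝ) 1, d (x (l t)) (y t))}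

lemma skDist_eq {E : Type*} (d : E → E → ℝ) (x y : ℝ → E) :
    skDist d x y = sInf (skSet d x y) := rfl

lemma skSet_nonempty {E : Type*} (d : E → E → ℝ) (x y : ℝ → E) : (skSet d x y).Nonempty :=
  ⟨_, id, skLambda_id, rfl⟩

lemma skSet_bddBelow {E : Type*} {d : E → E → ℝ} (hd : IsPseudometric d) (x y : ℝ → E) :
    BddBelow (skSet d x y) := by
  refine ⟨0, ?_⟩
  rintro r ⟨l, hl, rfl⟩
  exact le_max_of_le_left (Real.iSup_nonneg fun t => abs_nonneg _)

lemma skDist_nonneg {E : Type*} {d : E → E → ℝ} (hd : IsPseudometric d) (x y : ℝ → E) :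
    0 ≤ skDist d x y :=
  le_csInf (skSet_nonempty d x y) fun r hr => by
    obtain ⟨l, hl, rfl⟩ := hr
    exact le_max_of_le_left (Real.iSup_nonneg fun t => abs_nonneg _)

lemma skDist_le {E : Type*} {d : E → E → ℝ} (hd : IsPseudometric d) (x y : ℝ → E)
    {l : ℝ → ℝ} (hl : l ∈ SkLambda) :
    skDist d x y ≤ max (⨆ t : Set.Icc (0:ℝ) 1, |l t - (t : ℝ)|)
            (⨆ t : Set.Icc (0:ℝ) 1, d (x (l t)) (y t)) :=
  csInf_le (skSet_bddBelow hd x y) ⟨l, hl, rfl⟩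

lemma abs_family_bdd {l : ℝ → ℝ} (hl : l ∈ SkLambda) :
    BddAbove (Set.range fun t : Set.Icc (0:ℝ) 1 => |l t - (t : ℝ)|) := by
  refine ⟨1, ?_⟩
  rintro r ⟨t, rfl⟩
  have h1 := skLambda_maps hl t.2
  have h2 := t.2
  simp only [Set.mem_Icc] at h1 h2
  rw [abs_sub_le_iff]
  constructor <;> linarith

lemma skDist_self {E : Type*} {d : E → E → ℝ} (hd : IsPseudometric d) (x : ℝ → E) :
    skDist d x x = 0 := by
  refine le_antisymm ?_ (skDist_nonneg hd x x)
  have h := skDist_le hd x x skLambda_id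
  simpa [psd_refl hd, ciSup_const] using h

def SkBdd {E : Type*} (d : E → E → ℝ) (x : ℝ → E) : Prop :=
  ∃ M, ∀ s ∈ Set.Icc (0:ℝ) 1, ∀ t ∈ Set.Icc (0:ℝ) 1, d (x s) (x t) ≤ M

lemma cross_bdd {E : Type*} {d : E → E → ℝ} (hd : IsPseudometric d) {x y : ℝ → E}
    (hx : SkBdd d x) (hy : SkBdd d y) {l : ℝ → ℝ} (hl : l ∈ SkLambda) :
    BddAbove (Set.range fun t : Set.Icc (0:ℝ) 1 => d (x (l t)) (y t)) := by
  obtain ⟨Mx, hMx⟩ := hx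
  obtain ⟨My, hMy⟩ := hy
  have h0 : (0:ℝ) ∈ Set.Icc (0:ℝ) 1 := by norm_num
  refine ⟨Mx + d (x 0) (y 0) + My, ?_⟩
  rintro r ⟨t, rfl⟩
  have hlt := skLambda_maps hl t.2
  calc d (x (l t)) (y t) ≤ d (x (l t)) (x 0) + d (x 0) (y t) := psd_tri hd _ _ _
    _ ≤ d (x (l t)) (x 0) + (d (x 0) (y 0) + d (y 0) (y t)) := by
        have := psd_tri hd (x 0) (y 0) (y t); linarith
    _ ≤ Mx + d (x 0) (y 0) + My := by
        have h1 := hMx _ hlt _ h0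
        have h2 := hMy _ h0 _ t.2
        linarith

lemma skDist_symm_le {E : Type*} {d : E → E → ℝ} (hd : IsPseudometric d) {x y : ℝ → E}
    (hx : SkBdd d x) (hy : SkBdd d y) : skDist d y x ≤ skDist d x y := by
  rw [skDist_eq d x y]
  refine le_csInf (skSet_nonempty d x y) ?_
  rintro r ⟨l, hl, rfl⟩
  obtain ⟨m, hm, hminv⟩ := skLambda_inv hl
  refine le_trans (skDist_le hd y x hm) (max_le_max ?_ ?_)
  · refine ciSup_le fun t => ?_
    obtain ⟨hmem, heq⟩ := hminv t t.2
    have : |m t - (t:ℝ)| = |l (m t) - m t| := by rw [heq, abs_sub_comm]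
    rw [this]
    exact le_ciSup (abs_family_bdd hl) (⟨m t, hmem⟩ : Set.Icc (0:ℝ) 1)
  · refine ciSup_le fun t => ?_
    obtain ⟨hmem, heq⟩ := hminv t t.2
    have : d (y (m t)) (x t) = d (x (l (m t))) (y (m t)) := by
      rw [heq, psd_symm hd]
    rw [this]
    exact le_ciSup (cross_bdd hd hx hy hl) (⟨m t, hmem⟩ : Set.Icc (0:ℝ) 1)

lemma skDist_triangle {E : Type*} {d : E → E → ℝ} (hd : IsPseudometric d) {x y z : ℝ → E}
    (hx : SkBdd d x) (hy : SkBdd d y) (hz : SkBdd d z) :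
    skDist d x z ≤ skDist d x y + skDist d y z := by
  have key : ∀ r₁ ∈ skSet d x y, ∀ r₂ ∈ skSet d y z, skDist d x z ≤ r₁ + r₂ := by
    rintro r₁ ⟨l₁, hl₁, rfl⟩ r₂ ⟨l₂, hl₂, rfl⟩
    have hl : (l₁ ∘ l₂) ∈ SkLambda := skLambda_comp hl₁ hl₂
    refine le_trans (skDist_le hd x z hl) ?_
    have hA : (⨆ t : Set.Icc (0:ℝ) 1, |(l₁ ∘ l₂) t - (t:ℝ)|) ≤
        (⨆ t : Set.Icc (0:ℝ) 1, |l₁ t - (t:ℝ)|) + (⨆ t : Set.Icc (0:ℝ) 1, |l₂ t - (t:ℝ)|) := by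
      refine ciSup_le fun t => ?_
      have h1 : |l₁ (l₂ t) - (t:ℝ)| ≤ |l₁ (l₂ t) - l₂ t| + |l₂ t - (t:ℝ)| := by
        have := abs_sub_le (l₁ (l₂ t)) (l₂ t) (t:ℝ); exact this
      refine le_trans h1 (add_le_add ?_ ?_)
      · exact le_ciSup (abs_family_bdd hl₁) (⟨l₂ t, skLambda_maps hl₂ t.2⟩ : Set.Icc (0:ℝ) 1)
      · exact le_ciSup (abs_family_bdd hl₂) t
    have hB : (⨆ t : Set.Icc (0:ℝ) 1, d (x ((l₁ ∘ l₂) t)) (z t)) ≤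
        (⨆ t : Set.Icc (0:ℝ) 1, d (x (l₁ t)) (y t)) + (⨆ t : Set.Icc (0:ℝ) 1, d (y (l₂ t)) (z t)) := by
      refine ciSup_le fun t => ?_
      have h1 : d (x (l₁ (l₂ t))) (z t) ≤ d (x (l₁ (l₂ t))) (y (l₂ t)) + d (y (l₂ t)) (z t) :=
        psd_tri hd _ _ _
      refine le_trans h1 (add_le_add ?_ ?_)
      · exact le_ciSup (cross_bdd hd hx hy hl₁) (⟨l₂ t, skLambda_maps hl₂ t.2⟩ : Set.Icc (0:ℝ) 1)
      · exact le_ciSup (cross_bdd hd hy hz hl₂) t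
    calc max _ _ ≤ max ((⨆ t : Set.Icc (0:ℝ) 1, |l₁ t - (t:ℝ)|) + (⨆ t : Set.Icc (0:ℝ) 1, |l₂ t - (t:ℝ)|))
          ((⨆ t : Set.Icc (0:ℝ) 1, d (x (l₁ t)) (y t)) + (⨆ t : Set.Icc (0:ℝ) 1, d (y (l₂ t)) (z t))) :=
        max_le_max hA hB
      _ ≤ _ := by
        apply max_le <;> apply add_le_add
        · exact le_max_left _ _
        · exact le_max_left _ _
        · exact le_max_right _ _
        · exact le_max_right _ _
  have step1 : ∀ r₂ ∈ skSet d y z, skDist d x z - r₂ ≤ skDist d x y := by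
    intro r₂ h₂
    rw [skDist_eq d x y]
    refine le_csInf (skSet_nonempty d x y) fun r₁ h₁ => ?_
    have := key r₁ h₁ r₂ h₂
    linarith
  have step2 : skDist d x z - skDist d x y ≤ skDist d y z := by
    rw [skDist_eq d y z]
    refine le_csInf (skSet_nonempty d y z) fun r₂ h₂ => ?_
    have := step1 r₂ h₂
    linarith
  linarith
lemma continuous_pseudo {E : Type*} {ι : Type*} (d : ι → E → E → ℝ) (i : ι) (a : E) :
    @Continuous E ℝ (pseudoTop d) _ (fun b => d i a b) := by
  exact continuous_iff_le_induced.mpr (by unfold pseudoTop; exact iInf_le_of_le i (iInf_le _ a))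

lemma finset_dom {E I α : Type*} [Nonempty I] (d : I → E → E → ℝ)
    (hddir : ∀ i i', ∃ k, ∀ a b, max (d i a b) (d i' a b) ≤ d k a b)
    (f : α → I) (T : Finset α) :
    ∃ k, ∀ t ∈ T, ∀ a b, d (f t) a b ≤ d k a b := by
  classical
  induction T using Finset.induction_on with
  | empty => exact ⟨Classical.arbitrary I, by simp⟩
  | insert t T hts ih =>
    obtain ⟨k', hk'⟩ := ih
    obtain ⟨k, hk⟩ := hddir (f t) k'
    refine ⟨k, fun u hu a b => ?_⟩
    rcases Finset.mem_insert.1 hu with h | h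
    · rw [h]; exact le_trans (le_max_left _ _) (hk a b)
    · exact le_trans (hk' u h a b) (le_trans (le_max_right _ _) (hk a b))

lemma nhds_ball {E I : Type*} [Nonempty I] (d : I → E → E → ℝ)
    (hd : ∀ i, IsPseudometric (d i))
    (hddir : ∀ i i', ∃ k, ∀ a b, max (d i a b) (d i' a b) ≤ d k a b)
    (a : E) {s : Set E} (hs : s ∈ @nhds E (pseudoTop d) a) :
    ∃ i δ, 0 < δ ∧ {b | d i a b < δ} ⊆ s := by
  classical
  have hpt : pseudoTop d = ⨅ p : I × E,
      TopologicalSpace.induced (fun x => d p.1 p.2 x) inferInstance := by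
    rw [pseudoTop, iInf_prod]
  have hn : @nhds E (pseudoTop d) a =
      ⨅ p : I × E, Filter.comap (fun x => d p.1 p.2 x) (𝓝 (d p.1 p.2 a)) := by
    rw [hpt, _root_.nhds_iInf]
    exact iInf_congr fun p => @nhds_induced ℝ E _ _ a
  rw [hn] at hs
  rw [Filter.mem_iInf] at hs
  obtain ⟨P, hPfin, V, hV, rfl⟩ := hs
  -- choose radii
  have hrad : ∀ p : P, ∃ ε, 0 < ε ∧ {b | |d (p:I×E).1 (p:I×E).2 b - d (p:I×E).1 (p:I×E).2 a| < ε} ⊆ V p := by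
    intro p
    obtain ⟨t, ht, hsub⟩ := Filter.mem_comap.1 (hV p)
    obtain ⟨ε, hε, hball⟩ := Metric.mem_nhds_iff.1 ht
    refine ⟨ε, hε, fun b hb => hsub ?_⟩
    apply hball
    simpa [Metric.mem_ball, Real.dist_eq] using hb
  choose ε hεpos hεsub using hrad
  -- dominating index
  obtain ⟨k, hk⟩ := finset_dom d hddir (Prod.fst) hPfin.toFinset
  rcases Finset.eq_empty_or_nonempty hPfin.toFinset with hemp | hne
  · refine ⟨k, 1, one_pos, fun b _ => ?_⟩
    have hPe : P = ∅ := by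
      rw [← Set.Finite.coe_toFinset hPfin, hemp]; simp
    subst hPe
    simp
  · set ε' : I × E → ℝ := fun p => if h : p ∈ P then ε ⟨p, h⟩ else 1 with hε'
    refine ⟨k, hPfin.toFinset.inf' hne ε', ?_, ?_⟩
    · rw [Finset.lt_inf'_iff]
      intro p hp
      have hpP : p ∈ P := hPfin.mem_toFinset.1 hp
      simp only [hε', dif_pos hpP]
      exact hεpos ⟨p, hpP⟩
    · intro b hb
      simp only [Set.mem_iInter]
      intro p
      have hpT : (p : I × E) ∈ hPfin.toFinset := hPfin.mem_toFinset.2 p.2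
      apply hεsub p
      have h1 : |d (p:I×E).1 (p:I×E).2 b - d (p:I×E).1 (p:I×E).2 a| ≤ d (p:I×E).1 a b := by
        rw [abs_sub_le_iff]
        constructor
        · have := psd_tri (hd (p:I×E).1) (p:I×E).2 a b; linarith
        · have h2 := psd_tri (hd (p:I×E).1) (p:I×E).2 b a
          have h3 := psd_symm (hd (p:I×E).1) b a
          linarith
      have h2 : d (p:I×E).1 a b ≤ d k a b := hk _ hpT a b
      have h3 : d k a b < ε' (p : I × E) := lt_of_lt_of_le hb (Finset.inf'_le ε' hpT)
      have h4 : ε' (p : I × E) = ε p := by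
        simp only [hε', dif_pos p.2]
      simp only [Set.mem_setOf_eq]
      rw [h4] at h3
      calc |_| ≤ d (p:I×E).1 a b := h1
        _ ≤ d k a b := h2
        _ < ε p := h3

lemma cadlag_skBdd {E : Type*} {I : Type*} (d : I → E → E → ℝ)
    (hd : ∀ i, IsPseudometric (d i)) {x : ℝ → E} (hx : @Cadlag E (pseudoTop d) x)
    (i : I) : SkBdd (d i) x := by
  classical
  letI : TopologicalSpace E := pseudoTop d
  set g : ℝ → ℝ := fun t => d i (x 0) (x t) with hg
  -- local boundedness
  have key : ∀ t : ℝ, ∃ p : Set ℝ × ℝ, t ∈ Set.Icc (0:ℝ) 1 →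
      p.1 ∈ 𝓝 t ∧ ∀ s ∈ p.1 ∩ Set.Icc (0:ℝ) 1, g s ≤ p.2 := by
    intro t
    by_cases ht : t ∈ Set.Icc (0:ℝ) 1
    swap
    · exact ⟨(∅, 0), fun h => absurd h ht⟩
    -- right bound
    have hR : ∃ u, t < u ∧ ∀ s, t < s → s < u → s ≤ 1 → g s ≤ g t + 1 := by
      by_cases htlt : t < 1
      · have htend : Tendsto g (𝓝[>] t) (𝓝 (g t)) :=
          ((continuous_pseudo d i (x 0)).tendsto (x t)).comp (hx.1 t ⟨ht.1, htlt⟩)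
        have hev : {s | g s < g t + 1} ∈ 𝓝[>] t := htend (Iio_mem_nhds (by linarith))
        obtain ⟨u, hu, hsub⟩ := mem_nhdsGT_iff_exists_Ioo_subset.1 hev
        exact ⟨u, hu, fun s h1 h2 _ => le_of_lt (hsub ⟨h1, h2⟩)⟩
      · refine ⟨t + 1, by linarith, fun s h1 h2 h3 => ?_⟩
        push_neg at htlt
        linarith
    obtain ⟨u, htu, hu⟩ := hR
    -- left bound
    have hL : ∃ v cL, v < t ∧ ∀ s, v < s → s < t → 0 ≤ s → g s ≤ cL := by
      by_cases ht0 : 0 < t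
      · obtain ⟨L, hLt⟩ := hx.2 t ⟨ht0, ht.2⟩
        have htend : Tendsto g (𝓝[<] t) (𝓝 (d i (x 0) L)) :=
          ((continuous_pseudo d i (x 0)).tendsto L).comp hLt
        have hev : {s | g s < d i (x 0) L + 1} ∈ 𝓝[<] t := htend (Iio_mem_nhds (by linarith))
        obtain ⟨v, hv, hsub⟩ := mem_nhdsLT_iff_exists_Ioo_subset.1 hev
        exact ⟨v, d i (x 0) L + 1, hv, fun s h1 h2 _ => le_of_lt (hsub ⟨h1, h2⟩)⟩
      · push_neg at ht0
        refine ⟨t - 1, 0, by linarith, fun s h1 h2 h3 => ?_⟩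
        linarith
    obtain ⟨v, cL, hvt, hv⟩ := hL
    refine ⟨(Set.Ioo v u, max (g t + 1) cL), fun _ => ⟨Ioo_mem_nhds hvt htu, ?_⟩⟩
    rintro s ⟨⟨hs1, hs2⟩, hs3, hs4⟩
    rcases lt_trichotomy s t with h | h | h
    · exact le_trans (hv s hs1 h hs3) (le_max_right _ _)
    · subst h; exact le_trans (by linarith) (le_max_left _ _)
    · exact le_trans (hu s h hs2 hs4) (le_max_left _ _)
  choose p hp using key
  obtain ⟨T, hTmem, hTcov⟩ := isCompact_Icc.elim_nhds_subcover (fun t => (p t).1)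
    (fun t ht => (hp t ht).1)
  have h0T : ∃ t ∈ T, (0:ℝ) ∈ (p t).1 := by
    have : (0:ℝ) ∈ ⋃ t ∈ T, (p t).1 := hTcov (by norm_num)
    simpa using this
  obtain ⟨t₀, ht₀, _⟩ := h0T
  have hne : T.Nonempty := ⟨t₀, ht₀⟩
  have hM : ∀ t ∈ T, (p t).2 ≤ T.sup' hne fun t => (p t).2 :=
    fun t htT => Finset.le_sup' (fun t => (p t).2) htT
  set M₀ := T.sup' hne fun t => (p t).2 with hM₀
  have hbound : ∀ s ∈ Set.Icc (0:ℝ) 1, g s ≤ M₀ := by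
    intro s hs
    have : s ∈ ⋃ t ∈ T, (p t).1 := hTcov hs
    simp only [Set.mem_iUnion] at this
    obtain ⟨t, htT, hst⟩ := this
    have := (hp t (hTmem t htT)).2 s ⟨hst, hs⟩
    exact le_trans this (hM t htT)
  refine ⟨M₀ + M₀, fun s hs t ht => ?_⟩
  have h1 : d i (x s) (x t) ≤ d i (x s) (x 0) + d i (x 0) (x t) := psd_tri (hd i) _ _ _
  have h2 : d i (x s) (x 0) = g s := psd_symm (hd i) _ _
  have h3 := hbound s hs
  have h4 := hbound t ht
  rw [h2] at h1
  exact le_trans h1 (by linarith)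

-- core uniform estimate
lemma unif_est {E F : Type*} {I J : Type*} [Nonempty I]
    (d : I → E → E → ℝ) (ζ : J → F → F → ℝ)
    (hd : ∀ i, IsPseudometric (d i)) (hζ : ∀ j, IsPseudometric (ζ j))
    (hddir : ∀ i i', ∃ k, ∀ a b, max (d i a b) (d i' a b) ≤ d k a b)
    (ψ : E → F)
    (hψball : ∀ (a : E) (j : J) (ε : ℝ), 0 < ε →
      ∃ i δ, 0 < δ ∧ ∀ b, d i a b < δ → ζ j (ψ a) (ψ b) < ε)
    {x₀ : ℝ → E} (hx₀ : @Cadlag E (pseudoTop d) x₀)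
    (j : J) {ε : ℝ} (hε : 0 < ε) :
    ∃ k δ, 0 < δ ∧ ∀ s ∈ Set.Icc (0:ℝ) 1, ∀ b, d k (x₀ s) b < δ →
      ζ j (ψ (x₀ s)) (ψ b) ≤ ε := by
  classical
  letI : TopologicalSpace E := pseudoTop d
  have hε2 : 0 < ε / 2 := by linarith
  -- pointwise local estimate
  have key : ∀ t : ℝ, ∃ p : I × ℝ × Set ℝ, t ∈ Set.Icc (0:ℝ) 1 →
      0 < p.2.1 ∧ p.2.2 ∈ 𝓝 t ∧ ∀ s ∈ p.2.2 ∩ Set.Icc (0:ℝ) 1, ∀ b,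
        d p.1 (x₀ s) b < p.2.1 → ζ j (ψ (x₀ s)) (ψ b) ≤ ε := by
    intro t
    by_cases ht : t ∈ Set.Icc (0:ℝ) 1
    swap
    · exact ⟨(Classical.arbitrary I, 1, ∅), fun h => absurd h ht⟩
    -- right-hand data
    have hR : ∃ (i₁ : I) (δ₁ u : ℝ), 0 < δ₁ ∧ t < u ∧
        ∀ s, t ≤ s → s < u → s ∈ Set.Icc (0:ℝ) 1 → ∀ b,
          d i₁ (x₀ s) b < δ₁ → ζ j (ψ (x₀ s)) (ψ b) ≤ ε := by
      obtain ⟨i₁, δ₁, hδ₁, hball⟩ := hψball (x₀ t) j (ε/2) hε2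
      have main : ∀ s, d i₁ (x₀ t) (x₀ s) < δ₁ / 2 → ∀ b,
          d i₁ (x₀ s) b < δ₁ / 2 → ζ j (ψ (x₀ s)) (ψ b) ≤ ε := by
        intro s hs b hb
        have h1 : d i₁ (x₀ t) b < δ₁ :=
          lt_of_le_of_lt (psd_tri (hd i₁) _ (x₀ s) _) (by linarith)
        have h2 := hball b h1
        have h3 := hball (x₀ s) (by linarith)
        have h4 : ζ j (ψ (x₀ s)) (ψ b) ≤ ζ j (ψ (x₀ s)) (ψ (x₀ t)) + ζ j (ψ (x₀ t)) (ψ b) :=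
          psd_tri (hζ j) _ _ _
        have h5 : ζ j (ψ (x₀ s)) (ψ (x₀ t)) = ζ j (ψ (x₀ t)) (ψ (x₀ s)) := psd_symm (hζ j) _ _
        linarith
      by_cases htlt : t < 1
      · have htend : Tendsto (fun s => d i₁ (x₀ t) (x₀ s)) (𝓝[>] t) (𝓝 (d i₁ (x₀ t) (x₀ t))) :=
          ((continuous_pseudo d i₁ (x₀ t)).tendsto (x₀ t)).comp (hx₀.1 t ⟨ht.1, htlt⟩)
        rw [psd_refl (hd i₁)] at htend
        have hev : {s | d i₁ (x₀ t) (x₀ s) < δ₁ / 2} ∈ 𝓝[>] t :=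
          htend (Iio_mem_nhds (by linarith))
        obtain ⟨u, hu, hsub⟩ := mem_nhdsGT_iff_exists_Ioo_subset.1 hev
        refine ⟨i₁, δ₁/2, u, by linarith, hu, fun s hs1 hs2 _ b hb => ?_⟩
        rcases eq_or_lt_of_le hs1 with h | h
        · refine main s ?_ b hb
          rw [← h, psd_refl (hd i₁)]; linarith
        · exact main s (hsub ⟨h, hs2⟩) b hb
      · push_neg at htlt
        refine ⟨i₁, δ₁/2, t + 1, by linarith, by linarith, fun s hs1 hs2 hs3 b hb => ?_⟩
        have hst : s = t := le_antisymm (le_trans hs3.2 htlt) hs1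
        refine main s ?_ b hb
        rw [hst, psd_refl (hd i₁)]; linarith
    -- left-hand data
    have hL : ∃ (i₂ : I) (δ₂ v : ℝ), 0 < δ₂ ∧ v < t ∧
        ∀ s, v < s → s < t → s ∈ Set.Icc (0:ℝ) 1 → ∀ b,
          d i₂ (x₀ s) b < δ₂ → ζ j (ψ (x₀ s)) (ψ b) ≤ ε := by
      by_cases ht0 : 0 < t
      · obtain ⟨L, hLt⟩ := hx₀.2 t ⟨ht0, ht.2⟩
        obtain ⟨i₂, δ₂, hδ₂, hball⟩ := hψball L j (ε/2) hε2
        have htend : Tendsto (fun s => d i₂ L (x₀ s)) (𝓝[<] t) (𝓝 (d i₂ L L)) :=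
          ((continuous_pseudo d i₂ L).tendsto L).comp hLt
        rw [psd_refl (hd i₂)] at htend
        have hev : {s | d i₂ L (x₀ s) < δ₂ / 2} ∈ 𝓝[<] t :=
          htend (Iio_mem_nhds (by linarith))
        obtain ⟨v, hv, hsub⟩ := mem_nhdsLT_iff_exists_Ioo_subset.1 hev
        refine ⟨i₂, δ₂/2, v, by linarith, hv, fun s hs1 hs2 _ b hb => ?_⟩
        have hsL : d i₂ L (x₀ s) < δ₂ / 2 := hsub ⟨hs1, hs2⟩
        have h1 : d i₂ L b < δ₂ :=
          lt_of_le_of_lt (psd_tri (hd i₂) _ (x₀ s) _) (by linarith)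
        have h2 := hball b h1
        have h3 := hball (x₀ s) (by linarith)
        have h4 : ζ j (ψ (x₀ s)) (ψ b) ≤ ζ j (ψ (x₀ s)) (ψ L) + ζ j (ψ L) (ψ b) :=
          psd_tri (hζ j) _ _ _
        have h5 : ζ j (ψ (x₀ s)) (ψ L) = ζ j (ψ L) (ψ (x₀ s)) := psd_symm (hζ j) _ _
        linarith
      · push_neg at ht0
        refine ⟨Classical.arbitrary I, 1, t - 1, one_pos, by linarith, fun s hs1 hs2 hs3 b hb => ?_⟩
        exfalso; have := hs3.1; linarith
    obtain ⟨i₁, δ₁, u, hδ₁, htu, hu⟩ := hR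
    obtain ⟨i₂, δ₂, v, hδ₂, hvt, hv⟩ := hL
    obtain ⟨kt, hkt⟩ := hddir i₁ i₂
    refine ⟨(kt, min δ₁ δ₂, Set.Ioo v u), fun _ =>
      ⟨lt_min hδ₁ hδ₂, Ioo_mem_nhds hvt htu, ?_⟩⟩
    rintro s ⟨⟨hs1, hs2⟩, hsI⟩ b hb
    rcases lt_or_ge s t with h | h
    · refine hv s hs1 h hsI b ?_
      have := le_trans (le_max_right (d i₁ (x₀ s) b) _) (hkt (x₀ s) b)
      exact lt_of_le_of_lt this (lt_of_lt_of_le hb (min_le_right _ _))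
    · refine hu s h hs2 hsI b ?_
      have := le_trans (le_max_left _ (d i₂ (x₀ s) b)) (hkt (x₀ s) b)
      exact lt_of_le_of_lt this (lt_of_lt_of_le hb (min_le_left _ _))
  choose p hp using key
  obtain ⟨T, hTmem, hTcov⟩ := isCompact_Icc.elim_nhds_subcover (fun t => (p t).2.2)
    (fun t ht => (hp t ht).2.1)
  have h0T : (0:ℝ) ∈ ⋃ t ∈ T, (p t).2.2 := hTcov (by norm_num)
  have hne : T.Nonempty := by
    simp only [Set.mem_iUnion] at h0T
    obtain ⟨t, htT, _⟩ := h0T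
    exact ⟨t, htT⟩
  obtain ⟨k, hk⟩ := finset_dom d hddir (fun t => (p t).1) T
  refine ⟨k, T.inf' hne fun t => (p t).2.1, ?_, ?_⟩
  · rw [Finset.lt_inf'_iff]
    exact fun t htT => (hp t (hTmem t htT)).1
  · intro s hs b hb
    have : s ∈ ⋃ t ∈ T, (p t).2.2 := hTcov hs
    simp only [Set.mem_iUnion] at this
    obtain ⟨t, htT, hst⟩ := this
    refine (hp t (hTmem t htT)).2.2 s ⟨hst, hs⟩ b ?_
    have h1 : d (p t).1 (x₀ s) b ≤ d k (x₀ s) b := hk t htT _ _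
    have h2 : T.inf' hne (fun t => (p t).2.1) ≤ (p t).2.1 := Finset.inf'_le _ htT
    linarith

lemma ball_cont {E F : Type*} {I J : Type*} [Nonempty I]
    (d : I → E → E → ℝ) (ζ : J → F → F → ℝ)
    (hd : ∀ i, IsPseudometric (d i)) (hζ : ∀ j, IsPseudometric (ζ j))
    (hddir : ∀ i i', ∃ k, ∀ a b, max (d i a b) (d i' a b) ≤ d k a b)
    (ψ : E → F) (hψ : @Continuous E F (pseudoTop d) (pseudoTop ζ) ψ) :
    ∀ (a : E) (j : J) (ε : ℝ), 0 < ε →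
      ∃ i δ, 0 < δ ∧ ∀ b, d i a b < δ → ζ j (ψ a) (ψ b) < ε := by
  intro a j ε hε
  letI : TopologicalSpace E := pseudoTop d
  letI : TopologicalSpace F := pseudoTop ζ
  have hφ : Continuous fun b => ζ j (ψ a) (ψ b) := (continuous_pseudo ζ j (ψ a)).comp hψ
  have hmem : {b | ζ j (ψ a) (ψ b) < ε} ∈ 𝓝 a := by
    have hopen : IsOpen {b | ζ j (ψ a) (ψ b) < ε} := isOpen_Iio.preimage hφ
    refine hopen.mem_nhds ?_
    simp [psd_refl (hζ j), hε]
  obtain ⟨i, δ, hδ, hsub⟩ := nhds_ball d hd hddir a hmem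
  exact ⟨i, δ, hδ, fun b hb => hsub hb⟩

lemma skDist_lift {E F : Type*} {d0 : E → E → ℝ} {z : F → F → ℝ}
    (hd0 : IsPseudometric d0) (hz : IsPseudometric z) (ψ : E → F)
    {x₀ x : ℝ → E} (hbx₀ : SkBdd d0 x₀) (hbx : SkBdd d0 x)
    {δ ε δ' : ℝ} (hδ' : 0 < δ') (hδ'δ : δ' ≤ δ)
    (hunif : ∀ s ∈ Set.Icc (0:ℝ) 1, ∀ b, d0 (x₀ s) b < δ → z (ψ (x₀ s)) (ψ b) ≤ ε)
    (hlt : skDist d0 x₀ x < δ') :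
    skDist z (ψ ∘ x₀) (ψ ∘ x) ≤ max δ' ε := by
  rw [skDist_eq] at hlt
  obtain ⟨r, hr, hrlt⟩ := exists_lt_of_csInf_lt (skSet_nonempty d0 x₀ x) hlt
  obtain ⟨l, hl, rfl⟩ := hr
  have hA : (⨆ t : Set.Icc (0:ℝ) 1, |l t - (t:ℝ)|) < δ' :=
    lt_of_le_of_lt (le_max_left _ _) hrlt
  have hB : (⨆ t : Set.Icc (0:ℝ) 1, d0 (x₀ (l t)) (x t)) < δ' :=
    lt_of_le_of_lt (le_max_right _ _) hrlt
  refine le_trans (skDist_le hz (ψ ∘ x₀) (ψ ∘ x) hl) (max_le_max ?_ ?_)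
  · exact ciSup_le fun t => le_trans (le_ciSup (abs_family_bdd hl) t) (le_of_lt hA)
  · refine ciSup_le fun t => ?_
    have h1 : d0 (x₀ (l t)) (x t) ≤ ⨆ t : Set.Icc (0:ℝ) 1, d0 (x₀ (l t)) (x t) :=
      le_ciSup (cross_bdd hd0 hbx₀ hbx hl) t
    have h2 : d0 (x₀ (l t)) (x t) < δ := lt_of_le_of_lt h1 (lt_of_lt_of_le hB hδ'δ)
    exact hunif (l t) (skLambda_maps hl t.2) (x t) h2

/-- Composition with a continuous map `ψ : E → F` between completely regular spaces maps
càdlàg functions to càdlàg functions, and the induced map between the Skorohod spaces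
`D([0,1],E) → D([0,1],F)` is continuous (here the Skorohod topologies are given by
generating families of pseudometrics). -/
theorem skorohod_composition_continuous {E F : Type*} {I J : Type*}
    [tE : TopologicalSpace E] [CompletelyRegularSpace E]
    [tF : TopologicalSpace F] [CompletelyRegularSpace F]
    (d : I → E → E → ℝ) (ζ : J → F → F → ℝ)
    (hd : ∀ i, IsPseudometric (d i)) (hζ : ∀ j, IsPseudometric (ζ j))
    (hdsep : ∀ a b : E, a ≠ b → ∃ i, 0 < d i a b)
    (hζsep : ∀ a b : F, a ≠ b → ∃ j, 0 < ζ j a b)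
    (hddir : ∀ i i', ∃ k, ∀ a b, max (d i a b) (d i' a b) ≤ d k a b)
    (hζdir : ∀ j j', ∃ k, ∀ a b, max (ζ j a b) (ζ j' a b) ≤ ζ k a b)
    (htd : tE = pseudoTop d) (htζ : tF = pseudoTop ζ)
    (ψ : E → F) (hψ : Continuous ψ) :
    (∀ x : ℝ → E, Cadlag x → Cadlag (ψ ∘ x)) ∧
    ∃ Ψ : {x : ℝ → E | Cadlag x} → {y : ℝ → F | Cadlag y},
      (∀ x t, (Ψ x : ℝ → F) t = ψ ((x : ℝ → E) t)) ∧
      @Continuous _ _ (skTop {x : ℝ → E | Cadlag x} d) (skTop {y : ℝ → F | Cadlag y} ζ)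
        Ψ := by
  subst htd
  subst htζ
  letI : TopologicalSpace E := pseudoTop d
  letI : TopologicalSpace F := pseudoTop ζ
  have hcomp : ∀ x : ℝ → E, Cadlag x → Cadlag (ψ ∘ x) := by
    intro x hx
    constructor
    · intro t ht; exact (hψ.tendsto (x t)).comp (hx.1 t ht)
    · intro t ht; obtain ⟨L, hL⟩ := hx.2 t ht; exact ⟨ψ L, (hψ.tendsto L).comp hL⟩
  refine ⟨hcomp, fun x => ⟨ψ ∘ (x : ℝ → E), hcomp _ x.2⟩, fun x t => rfl, ?_⟩
  rcases isEmpty_or_nonempty I with hI | hI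
  · -- degenerate case : `E` is a subsingleton
    have hsubE : Subsingleton E := ⟨fun a b => by
      by_contra h
      obtain ⟨i, _⟩ := hdsep a b h
      exact hI.elim i⟩
    have hsubD : Subsingleton {x : ℝ → E | Cadlag x} :=
      ⟨fun a b => Subtype.ext (funext fun t => Subsingleton.elim _ _)⟩
    rw [continuous_def]
    intro s _
    rcases Set.eq_empty_or_nonempty
        ((fun x : {x : ℝ → E | Cadlag x} => (⟨ψ ∘ (x : ℝ → E), hcomp _ x.2⟩ :
          {y : ℝ → F | Cadlag y})) ⁻¹' s) with h | h
    · rw [h]; exact @isOpen_empty _ (skTop {x : ℝ → E | Cadlag x} d)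
    · obtain ⟨a, ha⟩ := h
      have : ((fun x : {x : ℝ → E | Cadlag x} => (⟨ψ ∘ (x : ℝ → E), hcomp _ x.2⟩ :
          {y : ℝ → F | Cadlag y})) ⁻¹' s) = Set.univ := by
        refine Set.eq_univ_of_forall fun y => ?_
        rwa [Subsingleton.elim y a]
      rw [this]; exact @isOpen_univ _ (skTop {x : ℝ → E | Cadlag x} d)
  · -- main case
    have hball := ball_cont d ζ hd hζ hddir ψ hψ
    refine continuous_iInf_rng.2 fun j => continuous_iInf_rng.2 fun y₀ =>
      continuous_induced_rng.2 ?_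
    show @Continuous _ _ (skTop {x : ℝ → E | Cadlag x} d) _
      fun x : {x : ℝ → E | Cadlag x} => skDist (ζ j) (y₀ : ℝ → F) (ψ ∘ (x : ℝ → E))
    refine (@continuous_iff_continuousAt _ _ (skTop {x : ℝ → E | Cadlag x} d) _ _).2
      fun x₁ => ?_
    refine Metric.tendsto_nhds.2 fun ε hε => ?_
    have hε3 : 0 < ε / 3 := by linarith
    obtain ⟨k, δ, hδ, hest⟩ := unif_est d ζ hd hζ hddir ψ hball x₁.2 j hε3
    set δ' := min δ (ε/3) with hδ'def
    have hδ'pos : 0 < δ' := lt_min hδ hε3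
    have hgcont : @Continuous _ _ (skTop {x : ℝ → E | Cadlag x} d) _
        (fun y : {x : ℝ → E | Cadlag x} => skDist (d k) (x₁ : ℝ → E) (y : ℝ → E)) := by
      unfold skTop
      exact continuous_iInf_dom (i := k) (continuous_iInf_dom (i := x₁) continuous_induced_dom)
    have hmemN : {y : {x : ℝ → E | Cadlag x} |
        skDist (d k) (x₁ : ℝ → E) (y : ℝ → E) < δ'} ∈
        @nhds _ (skTop {x : ℝ → E | Cadlag x} d) x₁ := by
      have hopen : @IsOpen _ (skTop {x : ℝ → E | Cadlag x} d)
          {y : {x : ℝ → E | Cadlag x} | skDist (d k) (x₁ : ℝ → E) (y : ℝ → E) < δ'} :=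
        @IsOpen.preimage _ _ (skTop {x : ℝ → E | Cadlag x} d) _ _ hgcont _ isOpen_Iio
      refine @IsOpen.mem_nhds _ (skTop {x : ℝ → E | Cadlag x} d) _ _ hopen ?_
      show skDist (d k) (x₁ : ℝ → E) (x₁ : ℝ → E) < δ'
      rw [skDist_self (hd k)]
      exact hδ'pos
    filter_upwards [hmemN] with x hx
    have hbx₁E := cadlag_skBdd d hd x₁.2 k
    have hbxE := cadlag_skBdd d hd x.2 k
    have hb1 := cadlag_skBdd ζ hζ (hcomp _ x₁.2) j
    have hb2 := cadlag_skBdd ζ hζ (hcomp _ x.2) j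
    have hby := cadlag_skBdd ζ hζ y₀.2 j
    have hlift : skDist (ζ j) (ψ ∘ (x₁ : ℝ → E)) (ψ ∘ (x : ℝ → E)) ≤ max δ' (ε/3) :=
      skDist_lift (hd k) (hζ j) ψ hbx₁E hbxE hδ'pos (min_le_left _ _) hest hx
    have hmax : max δ' (ε/3) ≤ ε/3 := max_le (min_le_right _ _) le_rfl
    have tri1 := skDist_triangle (hζ j) hby hb1 hb2
    have hsymm := skDist_symm_le (hζ j) hb1 hb2
    have tri2 := skDist_triangle (hζ j) hby hb2 hb1
    rw [Real.dist_eq, abs_sub_lt_iff]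
    constructor <;> linarith
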